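/- Let Q : ℝ³ → ℝ be defined by Q(x) = (1 + |x|/2)⁻¹, and let the energy be E(Q) = ∫_{ℝ³} (1/2)|∇Q(x)|² − (1/4)|x|⁻¹ Q(x)⁴ dx. Then E(Q) = 2π/3. -/

import Mathlib

open MeasureTheory

/-- The ground state `Q(x) = (1 + |x|/2)⁻¹` on `ℝ³`. -/
noncomputable def groundStateQ (x : EuclideanSpace ℝ (Fin 3)) : ℝ :=
  (1 + ‖x‖ / 2)⁻¹

namespace GroundStateAux

open Filter Set Real Topology

/-- Derivative of the profile `w y = (1 + y/2)⁻¹` for `y ≥ 0`. -/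
lemma hasDerivAt_w {y : ℝ} (hy : 0 ≤ y) :
    HasDerivAt (fun y : ℝ => (1 + y / 2)⁻¹)
      (-(1 / 2) * ((1 + y / 2)⁻¹) ^ 2) y := by
  have hne : 1 + y / 2 ≠ 0 := by nlinarith
  have h1 : HasDerivAt (fun y : ℝ => 1 + y / 2) (1 / 2) y := by
    simpa using ((hasDerivAt_id y).div_const 2).const_add 1
  have h2 := h1.inv hne
  rw [inv_pow, ← div_eq_mul_inv]
  exact h2

lemma tendsto_w : Tendsto (fun y : ℝ => (1 + y / 2)⁻¹) atTop (𝓝 0) := by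
  apply Filter.Tendsto.inv_tendsto_atTop
  exact tendsto_atTop_add_const_left _ 1 (tendsto_id.atTop_div_const two_pos)

/-- Integrability and value of `∫₀^∞ (1 + y/2)^{-(k+1)} dy = 2/k` for `k ≥ 1`. -/
lemma w_pow (k : ℕ) (hk : 1 ≤ k) :
    IntegrableOn (fun y : ℝ => ((1 + y / 2)⁻¹) ^ (k + 1)) (Set.Ioi 0) ∧
      ∫ y in Set.Ioi (0 : ℝ), ((1 + y / 2)⁻¹) ^ (k + 1) = 2 / k := by
  have hk0 : (k : ℝ) ≠ 0 := Nat.cast_ne_zero.2 (by omega)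
  set A : ℝ → ℝ := fun y => -(2 / k) * ((1 + y / 2)⁻¹) ^ k with hA
  have hderiv : ∀ y ∈ Set.Ici (0 : ℝ),
      HasDerivAt A (((1 + y / 2)⁻¹) ^ (k + 1)) y := by
    intro y hy
    have h := ((hasDerivAt_w hy).pow k).const_mul (-(2 / (k : ℝ)))
    have e1 : -(2 / (k : ℝ)) * ((k : ℝ) * (1 + y / 2)⁻¹ ^ (k - 1)
          * (-(1 / 2) * (1 + y / 2)⁻¹ ^ 2))
        = ((k : ℝ) * (k : ℝ)⁻¹) * ((1 + y / 2)⁻¹ ^ (k - 1) * (1 + y / 2)⁻¹ ^ 2) := by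
      ring
    rw [e1, mul_inv_cancel₀ hk0, one_mul, ← pow_add,
      show k - 1 + 2 = k + 1 by omega] at h
    exact h
  have hpos : ∀ y ∈ Set.Ioi (0 : ℝ), 0 ≤ ((1 + y / 2)⁻¹) ^ (k + 1) := by
    intro y hy
    have : (0 : ℝ) < 1 + y / 2 := by have := hy.out; nlinarith
    positivity
  have htend : Tendsto A atTop (𝓝 0) := by
    have h0 : -(2 / (k : ℝ)) * (0 : ℝ) ^ k = 0 := by
      rw [zero_pow (by omega : k ≠ 0)]; ring
    have h := (tendsto_w.pow k).const_mul (-(2 / (k : ℝ)))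
    rw [h0] at h
    exact h
  have hval := integral_Ioi_of_hasDerivAt_of_nonneg' hderiv hpos htend
  have hint := integrableOn_Ioi_deriv_of_nonneg' hderiv hpos htend
  refine ⟨hint, ?_⟩
  rw [hval]
  simp [hA]

/-- The 1D radial integral. -/
lemma radial_integral :
    ∫ y in Set.Ioi (0 : ℝ),
        y ^ 2 • (1 / 2 * (1 / 4 * ((1 + y / 2)⁻¹) ^ 4)
          - 1 / 4 * (y⁻¹ * ((1 + y / 2)⁻¹) ^ 4)) = 1 / 6 := by
  have hi2 : IntegrableOn (fun y : ℝ => ((1 + y / 2)⁻¹) ^ 2) (Set.Ioi 0) :=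
    (w_pow 1 le_rfl).1
  have hi3 : IntegrableOn (fun y : ℝ => ((1 + y / 2)⁻¹) ^ 3) (Set.Ioi 0) :=
    (w_pow 2 one_le_two).1
  have hi4 : IntegrableOn (fun y : ℝ => ((1 + y / 2)⁻¹) ^ 4) (Set.Ioi 0) :=
    (w_pow 3 (by norm_num)).1
  have hv2 : ∫ y in Set.Ioi (0 : ℝ), ((1 + y / 2)⁻¹) ^ 2 = 2 :=
    ((w_pow 1 le_rfl).2).trans (by norm_num)
  have hv3 : ∫ y in Set.Ioi (0 : ℝ), ((1 + y / 2)⁻¹) ^ 3 = 1 :=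
    ((w_pow 2 one_le_two).2).trans (by norm_num)
  have hv4 : ∫ y in Set.Ioi (0 : ℝ), ((1 + y / 2)⁻¹) ^ 4 = 2 / 3 :=
    ((w_pow 3 (by norm_num)).2).trans (by norm_num)
  have hcongr : Set.EqOn
      (fun y : ℝ => y ^ 2 • (1 / 2 * (1 / 4 * ((1 + y / 2)⁻¹) ^ 4)
          - 1 / 4 * (y⁻¹ * ((1 + y / 2)⁻¹) ^ 4)))
      (fun y : ℝ => 1 / 2 * ((1 + y / 2)⁻¹) ^ 2 - 3 / 2 * ((1 + y / 2)⁻¹) ^ 3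
          + ((1 + y / 2)⁻¹) ^ 4) (Set.Ioi 0) := by
    intro y hy
    have hy0 : (0 : ℝ) < y := hy
    have hu : (0 : ℝ) < 1 + y / 2 := by nlinarith
    simp only [smul_eq_mul]
    field_simp
    ring
  rw [setIntegral_congr_fun measurableSet_Ioi hcongr]
  have hint1 : IntegrableOn
      (fun y : ℝ => 1 / 2 * ((1 + y / 2)⁻¹) ^ 2) (Set.Ioi 0) := hi2.const_mul _
  have hint2 : IntegrableOn
      (fun y : ℝ => 3 / 2 * ((1 + y / 2)⁻¹) ^ 3) (Set.Ioi 0) := hi3.const_mul _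
  have hsub : IntegrableOn
      (fun y : ℝ => 1 / 2 * ((1 + y / 2)⁻¹) ^ 2 - 3 / 2 * ((1 + y / 2)⁻¹) ^ 3)
      (Set.Ioi 0) := hint1.sub hint2
  rw [integral_add hsub hi4, integral_sub hint1 hint2,
    integral_const_mul, integral_const_mul, hv2, hv3, hv4]
  norm_num

/-- The sum of squared partial derivatives of `Q` away from the origin. -/
lemma sum_sq_fderiv (x : EuclideanSpace ℝ (Fin 3)) (hx : x ≠ 0) :
    ∑ i : Fin 3, (fderiv ℝ groundStateQ x (EuclideanSpace.single i (1 : ℝ))) ^ 2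
      = 1 / 4 * ((1 + ‖x‖ / 2)⁻¹) ^ 4 := by
  have hr : 0 < ‖x‖ := norm_pos_iff.2 hx
  have hu : (0 : ℝ) < 1 + ‖x‖ / 2 := by nlinarith
  have hs : (0 : ℝ) < ‖x‖ ^ 2 := by positivity
  have hsq : Real.sqrt (‖x‖ ^ 2) = ‖x‖ := Real.sqrt_sq (norm_nonneg x)
  set c : ℝ := (-(1 / (2 * ‖x‖) / 2) / (1 + ‖x‖ / 2) ^ 2) * 2 with hc
  have hd : HasFDerivAt groundStateQ
      (c • (innerSL ℝ x : EuclideanSpace ℝ (Fin 3) →L[ℝ] ℝ)) x := by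
    have hφ : HasDerivAt (fun s : ℝ => (1 + Real.sqrt s / 2)⁻¹)
        (-(1 / (2 * ‖x‖) / 2) / (1 + ‖x‖ / 2) ^ 2) (‖x‖ ^ 2) := by
      have h1 : HasDerivAt (fun s : ℝ => 1 + Real.sqrt s / 2)
          (1 / (2 * Real.sqrt (‖x‖ ^ 2)) / 2) (‖x‖ ^ 2) :=
        ((Real.hasDerivAt_sqrt hs.ne').div_const 2).const_add 1
      have hne : 1 + Real.sqrt (‖x‖ ^ 2) / 2 ≠ 0 := by rw [hsq]; exact hu.ne'
      have := h1.inv hne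
      rw [hsq] at this
      exact this
    have hn : HasFDerivAt (fun y : EuclideanSpace ℝ (Fin 3) => ‖y‖ ^ 2)
        ((2 : ℕ) • (innerSL ℝ x)) x := (hasStrictFDerivAt_norm_sq x).hasFDerivAt
    have hcomp := hφ.comp_hasFDerivAt x hn
    have hfun : ((fun s : ℝ => (1 + Real.sqrt s / 2)⁻¹)
          ∘ fun y : EuclideanSpace ℝ (Fin 3) => ‖y‖ ^ 2) = groundStateQ := by
      funext y
      simp only [Function.comp_apply, Real.sqrt_sq (norm_nonneg y)]
      rfl
    rw [hfun] at hcomp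
    refine hcomp.congr_fderiv ?_
    ext y
    simp [c]
    ring
  rw [hd.fderiv]
  have hterm : ∀ i : Fin 3,
      ((c • (innerSL ℝ x : EuclideanSpace ℝ (Fin 3) →L[ℝ] ℝ))
        (EuclideanSpace.single i (1 : ℝ))) ^ 2 = c ^ 2 * (x i) ^ 2 := by
    intro i
    simp [EuclideanSpace.inner_single_right, mul_pow]
  rw [Finset.sum_congr rfl fun i _ => hterm i, ← Finset.mul_sum]
  have hnorm : ∑ i : Fin 3, (x i) ^ 2 = ‖x‖ ^ 2 := by
    rw [PiLp.norm_sq_eq_of_L2]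
    simp [Real.norm_eq_abs, sq_abs]
  rw [hnorm, hc]
  field_simp
  ring

lemma volume_unit_ball :
    (volume (Metric.ball (0 : EuclideanSpace ℝ (Fin 3)) 1)).toReal
      = 4 * Real.pi / 3 := by
  have hG : Real.Gamma ((3 : ℝ) / 2 + 1) = 3 / 4 * Real.sqrt Real.pi := by
    rw [Real.Gamma_add_one (by norm_num)]
    rw [show (3 : ℝ) / 2 = 1 / 2 + 1 by norm_num,
      Real.Gamma_add_one (by norm_num), Real.Gamma_one_half_eq]
    ring
  have hsqrt : (0 : ℝ) < Real.sqrt Real.pi := Real.sqrt_pos.2 Real.pi_pos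
  rw [EuclideanSpace.volume_ball]
  have hcard : (Fintype.card (Fin 3)) = 3 := by simp
  rw [hcard]
  rw [show ((3 : ℕ) : ℝ) = 3 by norm_num, hG]
  have hval : Real.sqrt Real.pi ^ 3 / (3 / 4 * Real.sqrt Real.pi)
      = 4 * Real.pi / 3 := by
    have h2 : Real.sqrt Real.pi ^ 3 = Real.pi * Real.sqrt Real.pi := by
      rw [pow_succ, Real.sq_sqrt Real.pi_pos.le]
    rw [h2]
    field_simp
  rw [hval]
  simp [ENNReal.toReal_ofReal (by positivity : (0:ℝ) ≤ 4 * Real.pi / 3)]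

end GroundStateAux

/-- The energy of the ground state:
`E(Q) = ∫ (1/2)|∇Q|² − (1/4)|x|⁻¹ Q⁴ dx = 2π/3`,
where `|∇Q(x)|²` is the sum of the squares of the partial derivatives of `Q` at `x`. -/
theorem groundState_energy :
    (∫ x : EuclideanSpace ℝ (Fin 3),
        ((1 / 2) * ∑ i : Fin 3,
            (fderiv ℝ groundStateQ x (EuclideanSpace.single i (1 : ℝ))) ^ 2)
          - (1 / 4) * (‖x‖⁻¹ * (groundStateQ x) ^ 4))
      = 2 * Real.pi / 3 := by
  classical
  set g : ℝ → ℝ := fun r => 1 / 2 * (1 / 4 * ((1 + r / 2)⁻¹) ^ 4)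
      - 1 / 4 * (r⁻¹ * ((1 + r / 2)⁻¹) ^ 4) with hg
  have hae : ∀ᵐ x : EuclideanSpace ℝ (Fin 3),
      ((1 / 2) * ∑ i : Fin 3,
            (fderiv ℝ groundStateQ x (EuclideanSpace.single i (1 : ℝ))) ^ 2)
          - (1 / 4) * (‖x‖⁻¹ * (groundStateQ x) ^ 4) = g ‖x‖ := by
    have h0 : ∀ᵐ x : EuclideanSpace ℝ (Fin 3), x ≠ 0 := by
      refine ae_iff.2 ?_
      simp only [ne_eq, not_not]
      rw [show {a : EuclideanSpace ℝ (Fin 3) | a = 0} = {0} from rfl]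
      exact measure_singleton 0
    filter_upwards [h0] with x hx
    rw [GroundStateAux.sum_sq_fderiv x hx, hg]
    rfl
  rw [integral_congr_ae hae]
  rw [MeasureTheory.integral_fun_norm_addHaar volume g]
  simp only [finrank_euclideanSpace_fin]
  rw [measureReal_def, GroundStateAux.volume_unit_ball]
  rw [show (3 - 1 : ℕ) = 2 from rfl]
  have hrad : ∫ y in Set.Ioi (0 : ℝ), y ^ 2 • g y = 1 / 6 :=
    GroundStateAux.radial_integral
  rw [hrad]
  simp only [nsmul_eq_mul, smul_eq_mul]
  push_cast
  ring
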